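/- Let G be a d-regular simple graph on a finite vertex set V with n vertices, where d ≥ 1, and let t ≥ 2 be an integer. Then the number of subsets A ⊆ V with |A| = t such that the subgraph of G induced on A is connected is at most 4^(t-2) · d · (d-1)^(t-2) · n. -/

import Mathlib

open Relation
namespace CISC
set_option linter.unusedSectionVars false
set_option maxHeartbeats 1000000
variable {V : Type*} [Fintype V] [DecidableEq V] {G : SimpleGraph V} [DecidableRel G.Adj]

def connRel (G : SimpleGraph V) (s : Finset V) (a b : V) : Prop := G.Adj a b ∧ a ∈ s ∧ b ∈ s
def Conn (G : SimpleGraph V) (s : Finset V) (a b : V) : Prop :=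
  Relation.ReflTransGen (connRel G s) a b

lemma conn_symm' {s : Finset V} {a b : V} (h : Conn G s a b) : Conn G s b a :=
  haveI : Std.Symm (connRel G s) := ⟨fun _ _ h => ⟨h.1.symm, h.2.2, h.2.1⟩⟩
  Std.Symm.symm (r := ReflTransGen (connRel G s)) _ _ h

lemma conn_of_induce_connected {A : Finset V} (h : (G.induce (A : Set V)).Connected) :
    ∀ x ∈ A, ∀ y ∈ A, Conn G A x y := by
  have key : ∀ (a b : (A : Set V)), (G.induce (A : Set V)).Walk a b → Conn G A a b := by
    intro a b p
    induction p with
    | nil => exact ReflTransGen.refl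
    | @cons u w _ huw _ ih =>
        exact ReflTransGen.head ⟨huw, Finset.mem_coe.mp u.2, Finset.mem_coe.mp w.2⟩ ih
  intro x hx y hy
  obtain ⟨p⟩ := h.preconnected ⟨x, by simpa⟩ ⟨y, by simpa⟩
  exact key _ _ p

lemma exists_adj_of_conn {A : Finset V} (hcard : 2 ≤ A.card) {v : V} (hv : v ∈ A)
    (hconn : ∀ x ∈ A, ∀ y ∈ A, Conn G A x y) : ∃ w ∈ A, G.Adj v w := by
  obtain ⟨u, hu, huv⟩ : ∃ u ∈ A, u ≠ v := by
    obtain ⟨u, hu, w, hw, huw⟩ := Finset.one_lt_card.mp hcard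
    rcases eq_or_ne u v with rfl | h
    · exact ⟨w, hw, fun hwv => huw hwv.symm⟩
    · exact ⟨u, hu, h⟩
  rcases (hconn v hv u hu).cases_head with rfl | ⟨c, hc, _⟩
  · exact absurd rfl huv
  · exact ⟨c, hc.2.2, hc.1⟩

open Classical in
noncomputable def comp (G : SimpleGraph V) (A : Finset V) (v w : V) : Finset V :=
  (A.erase v).filter (fun x => Conn G (A.erase v) w x)

open Classical in
lemma mem_comp {A : Finset V} {v w x : V} :
    x ∈ comp G A v w ↔ x ∈ A.erase v ∧ Conn G (A.erase v) w x := by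
  simp [comp]

lemma comp_subset {A : Finset V} {v w : V} : comp G A v w ⊆ A.erase v :=
  fun _ hx => (mem_comp.mp hx).1

lemma self_mem_comp {A : Finset V} {v w : V} (hw : w ∈ A.erase v) : w ∈ comp G A v w :=
  mem_comp.mpr ⟨hw, ReflTransGen.refl⟩

lemma conn_comp_aux {A : Finset V} {v w x : V} (h : Conn G (A.erase v) w x) :
    Conn G (comp G A v w) w x := by
  induction h with
  | refl => exact ReflTransGen.refl
  | @tail b c hwb hbc ih =>
      exact ih.tail ⟨hbc.1, mem_comp.mpr ⟨hbc.2.1, hwb⟩, mem_comp.mpr ⟨hbc.2.2, hwb.tail hbc⟩⟩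

lemma comp_conn {A : Finset V} {v w : V} :
    ∀ x ∈ comp G A v w, ∀ y ∈ comp G A v w, Conn G (comp G A v w) x y := by
  intro x hx y hy
  exact ReflTransGen.trans (conn_symm' (conn_comp_aux (mem_comp.mp hx).2))
    (conn_comp_aux (mem_comp.mp hy).2)

lemma sdiff_comp_conn_aux {A : Finset V} {v w : V} (hv : v ∈ A) :
    ∀ x, Conn G A x v → x ∈ A \ comp G A v w → Conn G (A \ comp G A v w) x v := by
  intro x h
  induction h using ReflTransGen.head_induction_on with
  | refl => intro _; exact ReflTransGen.refl
  | @head a c hac hcv ih =>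
      intro ha
      rcases eq_or_ne a v with rfl | hav
      · exact ReflTransGen.refl
      have hvAB : v ∈ A \ comp G A v w := by
        simp only [Finset.mem_sdiff]
        exact ⟨hv, fun hmem => (Finset.notMem_erase v A) (comp_subset hmem)⟩
      rcases eq_or_ne c v with rfl | hcv'
      · exact ReflTransGen.single ⟨hac.1, ha, hvAB⟩
      by_cases hcB : c ∈ comp G A v w
      · exfalso
        have hxB : a ∈ comp G A v w := by
          obtain ⟨hc1, hc2⟩ := mem_comp.mp hcB
          refine mem_comp.mpr ⟨Finset.mem_erase.mpr ⟨hav, hac.2.1⟩, hc2.tail ?_⟩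
          exact ⟨hac.1.symm, hc1, Finset.mem_erase.mpr ⟨hav, hac.2.1⟩⟩
        exact (Finset.mem_sdiff.mp ha).2 hxB
      · have hcAB : c ∈ A \ comp G A v w := Finset.mem_sdiff.mpr ⟨hac.2.2, hcB⟩
        exact ReflTransGen.head ⟨hac.1, ha, hcAB⟩ (ih hcAB)

lemma sdiff_comp_conn {A : Finset V} {v w : V} (hv : v ∈ A)
    (hconn : ∀ x ∈ A, ∀ y ∈ A, Conn G A x y) :
    ∀ x ∈ A \ comp G A v w, ∀ y ∈ A \ comp G A v w, Conn G (A \ comp G A v w) x y := by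
  intro x hx y hy
  have h1 := sdiff_comp_conn_aux hv x (hconn x (Finset.mem_sdiff.mp hx).1 v hv) hx
  have h2 := sdiff_comp_conn_aux hv y (hconn y (Finset.mem_sdiff.mp hy).1 v hv) hy
  exact ReflTransGen.trans h1 (conn_symm' h2)

noncomputable def nbrElt (G : SimpleGraph V) [DecidableRel G.Adj] (u p : V) (i : ℕ) : V :=
  ((G.neighborFinset u).erase p).toList.getD i u

noncomputable def stepD (G : SimpleGraph V) [DecidableRel G.Adj] (k : ℕ)
    (st : List V × V × Finset V × List (Fin k)) (b : Bool) :
    List V × V × Finset V × List (Fin k) :=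
  match st, b with
  | (u :: rest, p, acc, is), true =>
      match is with
      | i :: is' => (nbrElt G u p i :: u :: rest, u, insert (nbrElt G u p i) acc, is')
      | [] => (u :: rest, p, acc, [])
  | (u :: rest, _, acc, is), false => (rest, u, acc, is)
  | ([], p, acc, is), _ => ([], p, acc, is)

lemma stepD_cons_true (k : ℕ) (u : V) (rest : List V) (p : V) (acc : Finset V)
    (i : Fin k) (is' : List (Fin k)) :
    stepD G k (u :: rest, p, acc, i :: is') true =
      (nbrElt G u p i :: u :: rest, u, insert (nbrElt G u p i) acc, is') := rfl

lemma stepD_cons_false (k : ℕ) (u : V) (rest : List V) (p : V) (acc : Finset V)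
    (is : List (Fin k)) :
    stepD G k (u :: rest, p, acc, is) false = (rest, u, acc, is) := rfl

lemma stepD_false_acc (k : ℕ) (st : List V × V × Finset V × List (Fin k)) :
    (stepD G k st false).2.2.1 = st.2.2.1 := by
  obtain ⟨stack, p, acc, is⟩ := st
  cases stack <;> rfl

lemma nbr_index {d : ℕ} (hreg : G.IsRegularOfDegree d) {v p w : V}
    (hp : G.Adj v p) (hw : G.Adj v w) (hwp : w ≠ p) :
    ∃ i : Fin (d - 1), nbrElt G v p (i : ℕ) = w := by
  have hmem : w ∈ (G.neighborFinset v).erase p :=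
    Finset.mem_erase.mpr ⟨hwp, (G.mem_neighborFinset ..).mpr hw⟩
  have hlen : ((G.neighborFinset v).erase p).toList.length = d - 1 := by
    rw [Finset.length_toList, Finset.card_erase_of_mem ((G.mem_neighborFinset ..).mpr hp)]
    rw [G.card_neighborFinset_eq_degree, hreg v]
  obtain ⟨n, hn, hget⟩ := List.getElem_of_mem (Finset.mem_toList.mpr hmem)
  refine ⟨⟨n, by omega⟩, ?_⟩
  simp only [nbrElt, List.getD_eq_getElem?_getD, List.getElem?_eq_getElem hn]
  simpa using hget

/-- The main DFS encoding lemma. -/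
theorem dfs {d : ℕ} (hreg : G.IsRegularOfDegree d) (A : Finset V) :
    ∀ v ∈ A, (∀ x ∈ A, ∀ y ∈ A, Conn G A x y) → ∀ p, G.Adj v p → p ∉ A →
    ∃ (bs : List Bool) (is : List (Fin (d - 1))) (q : V),
      bs.length = 2 * (A.card - 1) ∧ is.length = A.card - 1 ∧
      (2 ≤ A.card → ∃ bs', bs = bs' ++ [false]) ∧
      ∀ stack acc rest, v ∈ acc →
        List.foldl (stepD G (d - 1)) (v :: stack, p, acc, is ++ rest) bs =
          (v :: stack, q, acc ∪ A, rest) := by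
  induction A using Finset.strongInduction with
  | _ A ih =>
    intro v hv hconn p hadj hp
    rcases Nat.lt_or_ge A.card 2 with hcard | hcard
    · -- A = {v}
      have h1 : A.card = 1 := le_antisymm (by omega) (Finset.card_pos.mpr ⟨v, hv⟩)
      have hA : A = {v} := by
        obtain ⟨a, ha⟩ := Finset.card_eq_one.mp h1
        subst ha
        rw [Finset.mem_singleton.mp hv]
      refine ⟨[], [], p, by simp [hA], by simp [hA], by omega, ?_⟩
      intro stack acc rest hvacc
      simp [hA, Finset.union_eq_left.mpr (Finset.singleton_subset_iff.mpr hvacc)]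
    · -- inductive case
      obtain ⟨w, hwA, hvw⟩ := exists_adj_of_conn hcard hv hconn
      have hwv : w ≠ v := hvw.ne'
      have hwe : w ∈ A.erase v := Finset.mem_erase.mpr ⟨hwv, hwA⟩
      set B := comp G A v w with hB
      have hwB : w ∈ B := self_mem_comp hwe
      have hBsub : B ⊆ A := fun x hx => Finset.mem_of_mem_erase (comp_subset hx)
      have hvB : v ∉ B := fun h => Finset.notMem_erase v A (comp_subset h)
      have hBssub : B ⊂ A := Finset.ssubset_iff_of_subset hBsub |>.mpr ⟨v, hv, hvB⟩
      have hvA2 : v ∈ A \ B := Finset.mem_sdiff.mpr ⟨hv, hvB⟩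
      have hwA2 : w ∉ A \ B := fun h => (Finset.mem_sdiff.mp h).2 hwB
      have hA2ssub : A \ B ⊂ A := Finset.ssubset_iff_of_subset Finset.sdiff_subset |>.mpr
        ⟨w, hwA, hwA2⟩
      obtain ⟨bsB, isB, qB, hlB, hlB', _, hrunB⟩ :=
        ih B hBssub w hwB comp_conn v hvw.symm hvB
      obtain ⟨bsR, isR, qR, hlR, hlR', hlastR, hrunR⟩ :=
        ih (A \ B) hA2ssub v hvA2 (sdiff_comp_conn hv hconn) w hvw hwA2
      obtain ⟨i, hi⟩ := nbr_index hreg hadj hvw (fun h => hp (h ▸ hwA))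
      have hcards : (A \ B).card = A.card - B.card := Finset.card_sdiff_of_subset hBsub
      have hBpos : 1 ≤ B.card := Finset.card_pos.mpr ⟨w, hwB⟩
      have hA2pos : 1 ≤ (A \ B).card := Finset.card_pos.mpr ⟨v, hvA2⟩
      have hBle : B.card ≤ A.card := Finset.card_le_card hBsub
      refine ⟨true :: (bsB ++ false :: bsR), i :: (isB ++ isR), qR, ?_, ?_, ?_, ?_⟩
      · simp only [List.length_cons, List.length_append]; omega
      · simp only [List.length_cons, List.length_append]; omega
      · intro _
        rcases eq_or_ne (A \ B).card 1 with h1 | h1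
        · have : bsR = [] := List.eq_nil_of_length_eq_zero (by omega)
          exact ⟨true :: bsB, by simp [this]⟩
        · obtain ⟨bs', hbs'⟩ := hlastR (by omega)
          exact ⟨true :: (bsB ++ false :: bs'), by simp [hbs']⟩
      · intro stack acc rest hvacc
        have hU : insert w acc ∪ B ∪ (A \ B) = acc ∪ A := by
          ext x
          simp only [Finset.mem_union, Finset.mem_insert, Finset.mem_sdiff]
          constructor
          · rintro (((rfl | hx) | hx) | hx)
            · exact Or.inr hwA
            · exact Or.inl hx
            · exact Or.inr (hBsub hx)
            · exact Or.inr hx.1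
          · rintro (hx | hx)
            · exact Or.inl (Or.inl (Or.inr hx))
            · by_cases hxB : x ∈ B
              · exact Or.inl (Or.inr hxB)
              · exact Or.inr ⟨hx, hxB⟩
        calc List.foldl (stepD G (d - 1))
              (v :: stack, p, acc, (i :: (isB ++ isR)) ++ rest) (true :: (bsB ++ false :: bsR))
            = List.foldl (stepD G (d - 1))
              (w :: v :: stack, v, insert w acc, isB ++ (isR ++ rest)) (bsB ++ false :: bsR) := by
              rw [List.cons_append, List.foldl_cons, stepD_cons_true, hi, List.append_assoc]
          _ = List.foldl (stepD G (d - 1))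
              (w :: v :: stack, qB, insert w acc ∪ B, isR ++ rest) (false :: bsR) := by
              rw [List.foldl_append, hrunB _ _ _ (Finset.mem_insert_self w acc)]
          _ = List.foldl (stepD G (d - 1))
              (v :: stack, w, insert w acc ∪ B, isR ++ rest) bsR := by
              rw [List.foldl_cons, stepD_cons_false]
          _ = (v :: stack, qR, insert w acc ∪ B ∪ (A \ B), rest) := by
              rw [hrunR _ _ _ (Finset.mem_union_left _ (Finset.mem_insert_of_mem hvacc))]
          _ = (v :: stack, qR, acc ∪ A, rest) := by rw [hU]

end CISC

namespace Part2
open CISC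
variable {V : Type*} [Fintype V] [DecidableEq V] {G : SimpleGraph V} [DecidableRel G.Adj]

lemma ofFn_cast_get {α : Type*} (l : List α) {m : ℕ} (h : l.length = m) :
    List.ofFn (fun k : Fin m => l.get (Fin.cast h.symm k)) = l := by
  subst h
  simp [Fin.cast_refl, List.ofFn_get]

noncomputable def decode (G : SimpleGraph V) [DecidableRel G.Adj] (d t : ℕ)
    (c : V × Fin d × (Fin (2 * (t - 2)) → Bool) × (Fin (t - 2) → Fin (d - 1))) : Finset V :=
  (List.foldl (stepD G (d - 1))
    ((G.neighborFinset c.1).toList.getD (c.2.1 : ℕ) c.1 :: [c.1], c.1,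
      insert ((G.neighborFinset c.1).toList.getD (c.2.1 : ℕ) c.1) {c.1}, List.ofFn c.2.2.2)
    (List.ofFn c.2.2.1)).2.2.1

lemma decode_mk (d t : ℕ) (v : V) (i0 : Fin d) (f : Fin (2 * (t - 2)) → Bool)
    (g : Fin (t - 2) → Fin (d - 1)) :
    decode G d t ⟨v, i0, f, g⟩ =
      (List.foldl (stepD G (d - 1))
        ((G.neighborFinset v).toList.getD (i0 : ℕ) v :: [v], v,
          insert ((G.neighborFinset v).toList.getD (i0 : ℕ) v) {v}, List.ofFn g)
        (List.ofFn f)).2.2.1 := rfl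

lemma decode_surj {d t : ℕ} (hreg : G.IsRegularOfDegree d) (ht : 2 ≤ t)
    {A : Finset V} (hcard : A.card = t)
    (hconn : ∀ x ∈ A, ∀ y ∈ A, Conn G A x y) :
    ∃ c, decode G d t c = A := by
  have hA2 : 2 ≤ A.card := hcard ▸ ht
  have hAne : A.Nonempty := Finset.card_pos.mp (by omega)
  obtain ⟨v, hv⟩ := hAne
  obtain ⟨w, hwA, hvw⟩ := exists_adj_of_conn hA2 hv hconn
  have hwnb : w ∈ G.neighborFinset v := (G.mem_neighborFinset ..).mpr hvw
  have hlennb : (G.neighborFinset v).toList.length = d := by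
    rw [Finset.length_toList, G.card_neighborFinset_eq_degree, hreg v]
  obtain ⟨n0, hn0, hget0⟩ := List.getElem_of_mem (Finset.mem_toList.mpr hwnb)
  have hn0d : n0 < d := by omega
  have hw0 : (G.neighborFinset v).toList.getD (((⟨n0, hn0d⟩ : Fin d)) : ℕ) v = w := by
    simp only [List.getD_eq_getElem?_getD, List.getElem?_eq_getElem hn0]
    simpa using hget0
  have hwv : w ≠ v := hvw.ne'
  have hwe : w ∈ A.erase v := Finset.mem_erase.mpr ⟨hwv, hwA⟩
  set B := comp G A v w with hB
  have hwB : w ∈ B := self_mem_comp hwe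
  have hBsub : B ⊆ A := fun x hx => Finset.mem_of_mem_erase (comp_subset hx)
  have hvB : v ∉ B := fun h => Finset.notMem_erase v A (comp_subset h)
  have hvA2 : v ∈ A \ B := Finset.mem_sdiff.mpr ⟨hv, hvB⟩
  have hwA2 : w ∉ A \ B := fun h => (Finset.mem_sdiff.mp h).2 hwB
  obtain ⟨bsB, isB, qB, hlB, hlB', _, hrunB⟩ :=
    dfs hreg B w hwB comp_conn v hvw.symm hvB
  obtain ⟨bsR, isR, qR, hlR, hlR', hlastR, hrunR⟩ :=
    dfs hreg (A \ B) v hvA2 (sdiff_comp_conn hv hconn) w hvw hwA2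
  have hcards : (A \ B).card = A.card - B.card := Finset.card_sdiff_of_subset hBsub
  have hBpos : 1 ≤ B.card := Finset.card_pos.mpr ⟨w, hwB⟩
  have hA2pos : 1 ≤ (A \ B).card := Finset.card_pos.mpr ⟨v, hvA2⟩
  have hBle : B.card ≤ A.card := Finset.card_le_card hBsub
  rcases eq_or_ne (A \ B).card 1 with h1 | h1
  · -- A \ B = {v} : the code is just bsB / isB
    have hAB : A \ B = {v} := by
      obtain ⟨a, ha⟩ := Finset.card_eq_one.mp h1
      rw [ha]; rw [ha] at hvA2; rw [Finset.mem_singleton.mp hvA2]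
    have hlbits : bsB.length = 2 * (t - 2) := by omega
    have hlis : isB.length = t - 2 := by omega
    refine ⟨⟨v, ⟨n0, hn0d⟩, fun k => bsB.get (Fin.cast hlbits.symm k),
      fun k => isB.get (Fin.cast hlis.symm k)⟩, ?_⟩
    rw [decode_mk, ofFn_cast_get bsB hlbits, ofFn_cast_get isB hlis, hw0]
    have hrun := hrunB [v] (insert w {v}) [] (Finset.mem_insert_self w _)
    rw [List.append_nil] at hrun
    rw [hrun]
    ext x
    simp only [Finset.mem_union, Finset.mem_insert, Finset.mem_singleton]
    constructor
    · rintro ((rfl | rfl) | hx)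
      · exact hwA
      · exact hv
      · exact hBsub hx
    · intro hx
      by_cases hxB : x ∈ B
      · exact Or.inr hxB
      · have : x ∈ A \ B := Finset.mem_sdiff.mpr ⟨hx, hxB⟩
        rw [hAB, Finset.mem_singleton] at this
        exact Or.inl (Or.inr this)
  · -- (A \ B).card ≥ 2 : drop the final pop of bsR
    obtain ⟨bs', hbs'⟩ := hlastR (by omega)
    have hlbs' : bs'.length + 1 = 2 * ((A \ B).card - 1) := by
      rw [hbs', List.length_append] at hlR
      simpa using hlR
    have hlbits : (bsB ++ false :: bs').length = 2 * (t - 2) := by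
      simp only [List.length_append, List.length_cons]
      omega
    have hlis : (isB ++ isR).length = t - 2 := by
      simp only [List.length_append]
      omega
    refine ⟨⟨v, ⟨n0, hn0d⟩, fun k => (bsB ++ false :: bs').get (Fin.cast hlbits.symm k),
      fun k => (isB ++ isR).get (Fin.cast hlis.symm k)⟩, ?_⟩
    rw [decode_mk, ofFn_cast_get (bsB ++ false :: bs') hlbits, ofFn_cast_get (isB ++ isR) hlis, hw0]
    have hrun1 := hrunB [v] (insert w {v}) isR (Finset.mem_insert_self w _)
    have hvacc1 : v ∈ insert w {v} ∪ B :=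
      Finset.mem_union_left _ (Finset.mem_insert_of_mem (Finset.mem_singleton_self v))
    have hrun2 := hrunR [] (insert w {v} ∪ B) [] hvacc1
    rw [List.append_nil, hbs', List.foldl_append] at hrun2
    have haccX : (List.foldl (stepD G (d - 1)) ([v], w, insert w {v} ∪ B, isR) bs').2.2.1
        = insert w {v} ∪ B ∪ (A \ B) := by
      have hacc := stepD_false_acc (G := G) (d - 1)
        (List.foldl (stepD G (d - 1)) ([v], w, insert w {v} ∪ B, isR) bs')
      rw [show List.foldl (stepD G (d-1))
        (List.foldl (stepD G (d - 1)) ([v], w, insert w {v} ∪ B, isR) bs') [false]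
        = stepD G (d-1) (List.foldl (stepD G (d - 1)) ([v], w, insert w {v} ∪ B, isR) bs') false
        from rfl] at hrun2
      rw [hrun2] at hacc
      exact hacc.symm
    rw [List.foldl_append, hrun1, List.foldl_cons, stepD_cons_false, haccX]
    ext x
    simp only [Finset.mem_union, Finset.mem_insert, Finset.mem_singleton, Finset.mem_sdiff]
    constructor
    · rintro (((rfl | rfl) | hx) | hx)
      · exact hwA
      · exact hv
      · exact hBsub hx
      · exact hx.1
    · intro hx
      by_cases hxB : x ∈ B
      · exact Or.inl (Or.inr hxB)
      · exact Or.inr ⟨hx, hxB⟩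

end Part2

set_option synthInstance.maxHeartbeats 1000000

/-- If `G` is a `d`-regular simple graph on a finite vertex set `V` with `n`
vertices, `d ≥ 1`, and `t ≥ 2`, then the number of `t`-element subsets `A ⊆ V` inducing a
connected subgraph of `G` is at most `4^(t-2) * d * (d-1)^(t-2) * n`. -/
theorem connected_induced_subgraph_count {V : Type*} [Fintype V] [DecidableEq V] (G : SimpleGraph V) [DecidableRel G.Adj]
    (d t : ℕ) (hd : 1 ≤ d) (hreg : G.IsRegularOfDegree d) (ht : 2 ≤ t) :
    {A : Finset V | A.card = t ∧ (G.induce (A : Set V)).Connected}.ncard ≤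
      4 ^ (t - 2) * d * (d - 1) ^ (t - 2) * Fintype.card V := by
  have hsub : {A : Finset V | A.card = t ∧ (G.induce (A : Set V)).Connected} ⊆
      Set.range (Part2.decode G d t) := by
    intro A hA
    obtain ⟨c, hc⟩ := Part2.decode_surj hreg ht hA.1 (CISC.conn_of_induce_connected hA.2)
    exact ⟨c, hc⟩
  calc {A : Finset V | A.card = t ∧ (G.induce (A : Set V)).Connected}.ncard
      ≤ (Set.range (Part2.decode G d t)).ncard :=
        Set.ncard_le_ncard hsub (Set.finite_range _)
    _ = ((Part2.decode G d t) '' Set.univ).ncard := by rw [Set.image_univ]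
    _ ≤ (Set.univ : Set (V × Fin d × (Fin (2 * (t - 2)) → Bool) × (Fin (t - 2) → Fin (d - 1)))).ncard :=
        Set.ncard_image_le Set.finite_univ
    _ = Fintype.card (V × Fin d × (Fin (2 * (t - 2)) → Bool) × (Fin (t - 2) → Fin (d - 1))) := by
        rw [Set.ncard_univ, Nat.card_eq_fintype_card]
    _ = Fintype.card V * (d * (2 ^ (2 * (t - 2)) * (d - 1) ^ (t - 2))) := by
        simp [Fintype.card_prod, Fintype.card_fun]
    _ = 4 ^ (t - 2) * d * (d - 1) ^ (t - 2) * Fintype.card V := by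
        rw [pow_mul]
        norm_num
        ring
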